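/- Let R be a zero-sum-free semiring (a + b = 0 implies a = b = 0) with no nontrivial zero-divisors and no nontrivial nilpotents. Then for any commutative monoid M (written multiplicatively), the monoid semiring R[M] has no nontrivial zero-divisors. -/

import Mathlib

private lemma zsf_sum_eq_zero {R : Type*} [AddCommMonoid R]
    (hzsf : ∀ a b : R, a + b = 0 → a = 0 ∧ b = 0)
    {ι : Type*} (s : Finset ι) (f : ι → R) (hs : ∑ i ∈ s, f i = 0) :
    ∀ i ∈ s, f i = 0 := by
  induction s using Finset.cons_induction with
  | empty => simp
  | cons a s ha ih =>
    rw [Finset.sum_cons] at hs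
    obtain ⟨h1, h2⟩ := hzsf _ _ hs
    intro i hi
    rcases Finset.mem_cons.mp hi with rfl | hi
    · exact h1
    · exact ih h2 i hi

/-- Let `R` be a zero-sum-free commutative semiring with no nontrivial
zero-divisors and no nontrivial nilpotents.  Then for any commutative monoid `M`, the
monoid semiring `R[M]` has no nontrivial zero-divisors. -/
theorem monoidAlgebra_no_zero_divisors {R M : Type*} [CommSemiring R] [CommMonoid M]
    (hzsf : ∀ a b : R, a + b = 0 → a = 0 ∧ b = 0)
    (hzd : ∀ a b : R, a * b = 0 → a = 0 ∨ b = 0)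
    (hnil : ∀ a : R, IsNilpotent a → a = 0)
    (x y : MonoidAlgebra R M) (h : x * y = 0) :
    x = 0 ∨ y = 0 := by
  classical
  by_contra hc
  push_neg at hc
  obtain ⟨hx, hy⟩ := hc
  obtain ⟨m, hm⟩ := Finsupp.ne_iff.mp (mt MonoidAlgebra.coeff_eq_zero.mp hx)
  obtain ⟨n, hn⟩ := Finsupp.ne_iff.mp (mt MonoidAlgebra.coeff_eq_zero.mp hy)
  simp only [Finsupp.coe_zero, Pi.zero_apply] at hm hn
  have hcoef : (x * y).coeff (m * n) = 0 := by rw [h]; rfl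
  rw [MonoidAlgebra.coeff_mul, Finsupp.sum] at hcoef
  have h1 := zsf_sum_eq_zero hzsf _ _ hcoef m (Finsupp.mem_support_iff.mpr hm)
  rw [Finsupp.sum] at h1
  have h2 := zsf_sum_eq_zero hzsf _ _ h1 n (Finsupp.mem_support_iff.mpr hn)
  simp only [if_pos rfl] at h2
  rcases hzd _ _ h2 with h' | h'
  · exact hm h'
  · exact hn h'
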